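/- Conjugation of partitions gives a bijection between the set of unlimited parity alternating partitions of n with smallest part odd and the set of partitions of n in which every distinct part size appears an odd number of times: the conjugate of any partition in which all distinct part sizes occur an odd number of times is an unlimited parity alternating partition with smallest part odd, and vice versa. -/
import Mathlib


/-- A partition is (unlimited) parity alternating if any two consecutive distinct part
sizes have opposite parity. -/
def ParityAlternating {n : ℕ} (p : n.Partition) : Prop :=
  ∀ a ∈ p.parts, ∀ b ∈ p.parts, a < b →
    (∀ c ∈ p.parts, ¬(a < c ∧ c < b)) → (Odd a ↔ Even b)

/-- The smallest part of the partition is odd. -/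
def SmallestPartOdd {n : ℕ} (p : n.Partition) : Prop :=
  ∃ a ∈ p.parts, Odd a ∧ ∀ b ∈ p.parts, a ≤ b

/-- Every distinct part size occurs an odd number of times. -/
def OddMultAll {n : ℕ} (p : n.Partition) : Prop :=
  ∀ a ∈ p.parts, Odd (Multiset.count a p.parts)

/-- The multiset of parts of the conjugate partition: its `k`-th part (for `1 ≤ k`)
is the number of parts of the original partition that are at least `k`. -/
def conjParts (s : Multiset ℕ) : Multiset ℕ :=
  Multiset.filter (0 < ·)
    ((Finset.Icc 1 s.sum).val.map fun k => Multiset.card (s.filter fun a => k ≤ a))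

def Fc (s : Multiset ℕ) (k : ℕ) : ℕ := Multiset.card (s.filter fun a => k ≤ a)

lemma conjParts_eq (s : Multiset ℕ) :
    conjParts s = Multiset.filter (0 < ·) ((Finset.Icc 1 s.sum).val.map (Fc s)) := rfl

lemma Fc_anti (s : Multiset ℕ) {k k' : ℕ} (h : k ≤ k') : Fc s k' ≤ Fc s k :=
  Multiset.card_le_card (Multiset.monotone_filter_right s (fun a ha => le_trans h ha))

lemma Fc_le_card (s : Multiset ℕ) (k : ℕ) : Fc s k ≤ Multiset.card s :=
  Multiset.card_le_card (Multiset.filter_le _ s)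

lemma card_le_sum {s : Multiset ℕ} (h : ∀ a ∈ s, 0 < a) : Multiset.card s ≤ s.sum := by
  induction s using Multiset.induction with
  | empty => simp
  | cons a s ih =>
    simp only [Multiset.card_cons, Multiset.sum_cons]
    have := h a (by simp)
    have := ih (fun b hb => h b (by simp [hb]))
    omega

lemma count_add_Fc (s : Multiset ℕ) (k : ℕ) :
    Multiset.count k s + Fc s (k + 1) = Fc s k := by
  induction s using Multiset.induction with
  | empty => simp [Fc]
  | cons a s ih =>
    simp only [Fc, Multiset.count_cons, Multiset.filter_cons] at *
    by_cases h1 : k = a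
    · subst h1
      simp only [if_pos rfl, if_pos (le_refl k)]
      have : ¬ (k + 1 ≤ k) := by omega
      simp only [if_neg this]
      simp at ih ⊢
      omega
    · have h2 : (k ≤ a) ↔ (k + 1 ≤ a) := by omega
      by_cases h3 : k + 1 ≤ a
      · simp only [if_neg h1, if_pos h3, if_pos (h2.mpr h3)]
        simp at ih ⊢
        omega
      · simp only [if_neg h1, if_neg h3, if_neg (fun hh => h3 (h2.mp hh))]
        simpa using ih

lemma sum_Fc (N : ℕ) (s : Multiset ℕ) (hle : ∀ a ∈ s, a ≤ N) :
    ∑ k ∈ Finset.Icc 1 N, Fc s k = s.sum := by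
  induction s using Multiset.induction with
  | empty => simp [Fc]
  | cons a s ih =>
    have hstep : ∀ k, Fc (a ::ₘ s) k = Fc s k + if k ≤ a then 1 else 0 := by
      intro k
      simp only [Fc, Multiset.filter_cons]
      by_cases h : k ≤ a <;> simp [h]
    simp only [hstep, Finset.sum_add_distrib, Multiset.sum_cons]
    rw [ih (fun b hb => hle b (by simp [hb]))]
    have h4 : ∑ k ∈ Finset.Icc 1 N, (if k ≤ a then 1 else 0) = a := by
      rw [← Finset.card_filter]
      have h5 : (Finset.Icc 1 N).filter (fun k => k ≤ a) = Finset.Icc 1 a := by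
        ext j
        simp only [Finset.mem_filter, Finset.mem_Icc]
        have := hle a (by simp)
        omega
      simp [h5]
    omega

lemma sum_conjParts (s : Multiset ℕ) : (conjParts s).sum = s.sum := by
  rw [conjParts_eq]
  set t := (Finset.Icc 1 s.sum).val.map (Fc s) with ht
  have key : Multiset.filter (0 < ·) t + Multiset.filter (fun m => ¬ 0 < m) t = t :=
    Multiset.filter_add_not _ t
  have h2 : (Multiset.filter (fun m => ¬ 0 < m) t).sum = 0 := by
    apply Multiset.sum_eq_zero
    intro x hx
    have := Multiset.of_mem_filter hx
    omega
  have h3 := congrArg Multiset.sum key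
  rw [Multiset.sum_add, h2] at h3
  rw [add_zero] at h3
  rw [h3]
  have : t.sum = ∑ k ∈ Finset.Icc 1 s.sum, Fc s k := rfl
  rw [this]
  exact sum_Fc s.sum s (fun a ha => Multiset.le_sum_of_mem ha)

lemma mem_conjParts {s : Multiset ℕ} {m : ℕ} :
    m ∈ conjParts s ↔ 0 < m ∧ ∃ k, k ∈ Finset.Icc 1 s.sum ∧ Fc s k = m := by
  rw [conjParts_eq, Multiset.mem_filter, Multiset.mem_map]
  constructor
  · rintro ⟨⟨k, hk, hfk⟩, hm⟩
    exact ⟨hm, k, by simpa using hk, hfk⟩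
  · rintro ⟨hm, k, hk, hfk⟩
    exact ⟨⟨k, by simpa using hk, hfk⟩, hm⟩

lemma count_conjParts {s : Multiset ℕ} {m : ℕ} (hm : 0 < m) :
    Multiset.count m (conjParts s)
      = ((Finset.Icc 1 s.sum).filter (fun k => Fc s k = m)).card := by
  rw [conjParts_eq, Multiset.count_filter, if_pos hm, Multiset.count_map]
  show _ = Multiset.card (Multiset.filter _ (Finset.Icc 1 s.sum).val)
  congr 1
  apply Multiset.filter_congr
  intro x _
  constructor <;> (intro h; omega)

lemma card_filter_eq_split (T : Finset ℕ) (h : ℕ → ℕ) (m : ℕ) :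
    (T.filter (fun k => h k = m)).card + (T.filter (fun k => m + 1 ≤ h k)).card
      = (T.filter (fun k => m ≤ h k)).card := by
  rw [← Finset.card_union_of_disjoint]
  · congr 1
    ext j
    simp only [Finset.mem_union, Finset.mem_filter]
    constructor
    · rintro (⟨h1,h2⟩|⟨h1,h2⟩) <;> exact ⟨h1, by omega⟩
    · rintro ⟨h1,h2⟩
      rcases Nat.lt_or_ge (h j) (m+1) with h3 | h3
      · exact Or.inl ⟨h1, by omega⟩
      · exact Or.inr ⟨h1, h3⟩
  · rw [Finset.disjoint_left]
    intro j hj hj2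
    simp only [Finset.mem_filter] at hj hj2
    omega

def Ac (s : Multiset ℕ) (k : ℕ) : ℕ :=
  ((Finset.Icc 1 s.sum).filter (fun j => k ≤ Fc s j)).card
-- appended lemmas
lemma le_Ac_iff (s : Multiset ℕ) {m k : ℕ} (hm : 1 ≤ m) :
    m ≤ Ac s k ↔ m ≤ s.sum ∧ k ≤ Fc s m := by
  constructor
  · intro h
    have h1 : Ac s k ≤ s.sum := by
      have := Finset.card_filter_le (Finset.Icc 1 s.sum) (fun j => k ≤ Fc s j)
      simpa [Ac, Nat.card_Icc] using this
    refine ⟨le_trans h h1, ?_⟩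
    by_contra hk'
    push_neg at hk'
    have hsub : (Finset.Icc 1 s.sum).filter (fun j => k ≤ Fc s j) ⊆ Finset.Icc 1 (m - 1) := by
      intro j hj
      simp only [Finset.mem_filter, Finset.mem_Icc] at hj ⊢
      refine ⟨hj.1.1, ?_⟩
      by_contra hjm
      push_neg at hjm
      have : Fc s j ≤ Fc s m := Fc_anti s (by omega)
      omega
    have := Finset.card_le_card hsub
    simp only [Nat.card_Icc] at this
    have : Ac s k ≤ m - 1 := by simpa [Ac] using this
    omega
  · rintro ⟨hmN, hkF⟩
    have hsub : Finset.Icc 1 m ⊆ (Finset.Icc 1 s.sum).filter (fun j => k ≤ Fc s j) := by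
      intro j hj
      simp only [Finset.mem_Icc] at hj
      simp only [Finset.mem_filter, Finset.mem_Icc]
      exact ⟨⟨hj.1, le_trans hj.2 hmN⟩, le_trans hkF (Fc_anti s hj.2)⟩
    have := Finset.card_le_card hsub
    simpa [Ac, Nat.card_Icc] using this

lemma Fc_conj (s : Multiset ℕ) {k : ℕ} (hk : 1 ≤ k) :
    Fc (conjParts s) k = Ac s k := by
  rw [conjParts_eq]
  show Multiset.card (Multiset.filter _ (Multiset.filter _ _)) = _
  rw [Multiset.filter_filter]
  have h1 : Multiset.filter (fun a => k ≤ a ∧ 0 < a) ((Finset.Icc 1 s.sum).val.map (Fc s))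
      = Multiset.filter (fun a => k ≤ a) ((Finset.Icc 1 s.sum).val.map (Fc s)) := by
    apply Multiset.filter_congr
    intro x _
    constructor
    · exact fun h => h.1
    · exact fun h => ⟨h, by omega⟩
  rw [h1, Multiset.filter_map]
  rw [Multiset.card_map]
  rfl
lemma Fc_eq_zero_of_gt {s : Multiset ℕ} {m : ℕ} (h : ∀ a ∈ s, a < m) : Fc s m = 0 := by
  rw [Fc, Multiset.card_eq_zero, Multiset.filter_eq_nil]
  intro a ha
  have := h a ha
  omega

lemma level_card (s : Multiset ℕ) (hpos : ∀ a ∈ s, 0 < a) {m : ℕ} (hm : 1 ≤ m) :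
    ((Finset.Icc 1 s.sum).filter (fun k => m ≤ Fc (conjParts s) k)).card = Fc s m := by
  by_cases hmN : m ≤ s.sum
  · have heq : (Finset.Icc 1 s.sum).filter (fun k => m ≤ Fc (conjParts s) k)
        = Finset.Icc 1 (Fc s m) := by
      ext j
      simp only [Finset.mem_filter, Finset.mem_Icc]
      constructor
      · rintro ⟨⟨hj1, hj2⟩, hj3⟩
        rw [Fc_conj s hj1] at hj3
        have := (le_Ac_iff s hm).mp hj3
        exact ⟨hj1, this.2⟩
      · rintro ⟨hj1, hj2⟩
        have hFle : Fc s m ≤ s.sum := le_trans (Fc_le_card s m) (card_le_sum hpos)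
        refine ⟨⟨hj1, le_trans hj2 hFle⟩, ?_⟩
        rw [Fc_conj s hj1]
        exact (le_Ac_iff s hm).mpr ⟨hmN, hj2⟩
    rw [heq, Nat.card_Icc]; omega
  · push_neg at hmN
    have h0 : Fc s m = 0 := Fc_eq_zero_of_gt (fun a ha => lt_of_le_of_lt (Multiset.le_sum_of_mem ha) hmN)
    rw [h0, Finset.card_eq_zero, Finset.filter_eq_empty_iff]
    intro j hj
    simp only [Finset.mem_Icc] at hj
    rw [Fc_conj s hj.1]
    intro hc
    have := (le_Ac_iff s hm).mp hc
    omega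

lemma conj_conj (s : Multiset ℕ) (hpos : ∀ a ∈ s, 0 < a) :
    conjParts (conjParts s) = s := by
  ext m
  rcases Nat.eq_zero_or_pos m with rfl | hm
  · rw [Multiset.count_eq_zero_of_notMem, Multiset.count_eq_zero_of_notMem]
    · intro h; exact absurd (hpos 0 h) (by omega)
    · intro h; exact absurd (mem_conjParts.mp h).1 (by omega)
  · rw [count_conjParts hm]
    have hsum : (conjParts s).sum = s.sum := sum_conjParts s
    rw [hsum]
    have hsplit := card_filter_eq_split (Finset.Icc 1 s.sum) (Fc (conjParts s)) m
    have l1 := level_card s hpos (m := m) hm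
    have l2 := level_card s hpos (m := m + 1) (by omega)
    have l3 := count_add_Fc s m
    omega
lemma exists_mem_of_Fc_pos {s : Multiset ℕ} {k : ℕ} (h : 0 < Fc s k) :
    ∃ x ∈ s, k ≤ x := by
  rw [Fc, Multiset.card_pos] at h
  obtain ⟨x, hx⟩ := Multiset.exists_mem_of_ne_zero h
  rw [Multiset.mem_filter] at hx
  exact ⟨x, hx.1, hx.2⟩

lemma forward_PA (s : Multiset ℕ) (hodd : ∀ a ∈ s, Odd (Multiset.count a s)) :
    ∀ a ∈ conjParts s, ∀ b ∈ conjParts s, a < b →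
      (∀ c ∈ conjParts s, ¬(a < c ∧ c < b)) → (Odd a ↔ Even b) := by
  intro a ha b hb hab hbetween
  obtain ⟨hapos, k', hk', hFk'⟩ := mem_conjParts.mp ha
  obtain ⟨hbpos, k, hk, hFk⟩ := mem_conjParts.mp hb
  simp only [Finset.mem_Icc] at hk hk'
  set T := (Finset.Icc 1 s.sum).filter (fun j => Fc s j = b) with hT
  have hTne : T.Nonempty := ⟨k, by
    simp only [hT, Finset.mem_filter, Finset.mem_Icc]
    exact ⟨hk, hFk⟩⟩
  set j := T.max' hTne with hj
  have hjT : j ∈ T := T.max'_mem hTne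
  simp only [hT, Finset.mem_filter, Finset.mem_Icc] at hjT
  obtain ⟨⟨hj1, hjN⟩, hFj⟩ := hjT
  have hjk' : j < k' := by
    by_contra hc
    push_neg at hc
    have := Fc_anti s hc
    omega
  have hF1le : Fc s (j+1) ≤ b := by
    have := Fc_anti s (show j ≤ j + 1 by omega)
    omega
  have hFne : Fc s (j+1) ≠ b := by
    intro h
    have hmem : j + 1 ∈ T := by
      simp only [hT, Finset.mem_filter, Finset.mem_Icc]
      exact ⟨⟨by omega, by omega⟩, h⟩
    have := T.le_max' _ hmem
    omega
  have hFge : a ≤ Fc s (j+1) := by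
    have := Fc_anti s (show j + 1 ≤ k' by omega)
    omega
  by_cases heq : Fc s (j+1) = a
  · have hcnt := count_add_Fc s j
    have hjmem : j ∈ s := by
      rw [← Multiset.count_pos]
      omega
    have ho := hodd j hjmem
    rw [Nat.odd_iff] at ho
    rw [Nat.odd_iff, Nat.even_iff]
    omega
  · have hcmem : Fc s (j+1) ∈ conjParts s := mem_conjParts.mpr
      ⟨by omega, j+1, Finset.mem_Icc.mpr ⟨by omega, by omega⟩, rfl⟩
    exact absurd ⟨by omega, by omega⟩ (hbetween _ hcmem)

lemma forward_SPO (s : Multiset ℕ) (hpos : ∀ a ∈ s, 0 < a) (hne : s ≠ 0)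
    (hodd : ∀ a ∈ s, Odd (Multiset.count a s)) :
    ∃ a ∈ conjParts s, Odd a ∧ ∀ b ∈ conjParts s, a ≤ b := by
  have hne' : s.toFinset.Nonempty := by
    rw [Multiset.toFinset_nonempty]
    exact hne
  set M := s.toFinset.max' hne' with hM
  have hMmem : M ∈ s := Multiset.mem_toFinset.mp (s.toFinset.max'_mem hne')
  have hMmax : ∀ x ∈ s, x ≤ M := fun x hx => s.toFinset.le_max' x (Multiset.mem_toFinset.mpr hx)
  have hM1 : 1 ≤ M := hpos M hMmem
  have hMN : M ≤ s.sum := Multiset.le_sum_of_mem hMmem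
  have hF1 : Fc s (M+1) = 0 := Fc_eq_zero_of_gt (fun x hx => by
    have := hMmax x hx; omega)
  have hcnt := count_add_Fc s M
  have hcpos : 0 < Multiset.count M s := Multiset.count_pos.mpr hMmem
  have ho := hodd M hMmem
  refine ⟨Fc s M, mem_conjParts.mpr ⟨by omega, M, Finset.mem_Icc.mpr ⟨hM1, hMN⟩, rfl⟩, ?_, ?_⟩
  · rw [Nat.odd_iff] at ho ⊢
    omega
  · intro b hb
    obtain ⟨hbpos, k, hkIcc, hFkb⟩ := mem_conjParts.mp hb
    obtain ⟨x, hx, hkx⟩ := exists_mem_of_Fc_pos (show 0 < Fc s k by omega)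
    have hkM : k ≤ M := le_trans hkx (hMmax x hx)
    have := Fc_anti s hkM
    omega

lemma backward_odd (s : Multiset ℕ) (hpos : ∀ a ∈ s, 0 < a)
    (hPA : ∀ a ∈ conjParts s, ∀ b ∈ conjParts s, a < b →
      (∀ c ∈ conjParts s, ¬(a < c ∧ c < b)) → (Odd a ↔ Even b))
    (hSPO : ∃ a ∈ conjParts s, Odd a ∧ ∀ b ∈ conjParts s, a ≤ b) :
    ∀ a ∈ s, Odd (Multiset.count a s) := by
  intro a ha
  have ha1 : 1 ≤ a := hpos a ha
  have haN : a ≤ s.sum := Multiset.le_sum_of_mem ha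
  have hcnt := count_add_Fc s a
  have hcpos : 0 < Multiset.count a s := Multiset.count_pos.mpr ha
  by_cases h0 : Fc s (a+1) = 0
  · obtain ⟨sm, hsm, hsmodd, hsmmin⟩ := hSPO
    have hFa : Fc s a ∈ conjParts s := mem_conjParts.mpr
      ⟨by omega, a, Finset.mem_Icc.mpr ⟨ha1, haN⟩, rfl⟩
    have h1 : sm ≤ Fc s a := hsmmin _ hFa
    have h2 : Fc s a ≤ sm := by
      obtain ⟨hsmpos, k, hkIcc, hFk⟩ := mem_conjParts.mp hsm
      have hka : k ≤ a := by
        by_contra hka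
        push_neg at hka
        have := Fc_anti s (show a + 1 ≤ k by omega)
        omega
      have := Fc_anti s hka
      omega
    rw [Nat.odd_iff] at hsmodd ⊢
    omega
  · have haN1 : a + 1 ≤ s.sum := by
      obtain ⟨x, hx, hax⟩ := exists_mem_of_Fc_pos (show 0 < Fc s (a+1) by omega)
      exact le_trans hax (Multiset.le_sum_of_mem hx)
    have hmem1 : Fc s (a+1) ∈ conjParts s := mem_conjParts.mpr
      ⟨by omega, a+1, Finset.mem_Icc.mpr ⟨by omega, haN1⟩, rfl⟩
    have hmem2 : Fc s a ∈ conjParts s := mem_conjParts.mpr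
      ⟨by omega, a, Finset.mem_Icc.mpr ⟨ha1, haN⟩, rfl⟩
    have hlt : Fc s (a+1) < Fc s a := by omega
    have hnob : ∀ c ∈ conjParts s, ¬(Fc s (a+1) < c ∧ c < Fc s a) := by
      rintro c hc ⟨h1, h2⟩
      obtain ⟨_, k, hkIcc, hFk⟩ := mem_conjParts.mp hc
      by_cases hk : k ≤ a
      · have := Fc_anti s hk
        omega
      · have := Fc_anti s (show a + 1 ≤ k by omega)
        omega
    have hiff := hPA _ hmem1 _ hmem2 hlt hnob
    rw [Nat.odd_iff, Nat.even_iff] at hiff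
    rw [Nat.odd_iff]
    omega
def conjP {n : ℕ} (p : n.Partition) : n.Partition where
  parts := conjParts p.parts
  parts_pos := fun hi => (mem_conjParts.mp hi).1
  parts_sum := by rw [sum_conjParts]; exact p.parts_sum

theorem conj_bijection_smallest_odd (n : ℕ) (hn : 1 ≤ n) :
    ∃ e : {p : n.Partition // OddMultAll p} ≃
          {p : n.Partition // ParityAlternating p ∧ SmallestPartOdd p},
      (∀ p, (e p).val.parts = conjParts p.val.parts) ∧
      (∀ q, (e.symm q).val.parts = conjParts q.val.parts) := by
  have hnz : ∀ p : n.Partition, p.parts ≠ 0 := by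
    intro p hp
    have := p.parts_sum
    rw [hp] at this
    simp at this
    omega
  have hcc : ∀ p : n.Partition, conjP (conjP p) = p := by
    intro p
    apply Nat.Partition.ext
    exact conj_conj p.parts (fun a ha => p.parts_pos ha)
  have key1 : ∀ p : n.Partition, OddMultAll p →
      ParityAlternating (conjP p) ∧ SmallestPartOdd (conjP p) := by
    intro p hp
    exact ⟨forward_PA p.parts hp, forward_SPO p.parts (fun a ha => p.parts_pos ha) (hnz p) hp⟩
  have key2 : ∀ p : n.Partition, ParityAlternating p ∧ SmallestPartOdd p →
      OddMultAll (conjP p) := by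
    intro p ⟨h1, h2⟩
    have hq : (conjP (conjP p)).parts = p.parts := by rw [hcc]
    apply backward_odd (conjP p).parts (fun a ha => (conjP p).parts_pos ha)
    · show ∀ a ∈ conjParts (conjP p).parts, _
      rw [show conjParts (conjP p).parts = (conjP (conjP p)).parts from rfl, hq]
      exact h1
    · show ∃ a ∈ conjParts (conjP p).parts, _
      rw [show conjParts (conjP p).parts = (conjP (conjP p)).parts from rfl, hq]
      exact h2
  refine ⟨{ toFun := fun p => ⟨conjP p.1, key1 p.1 p.2⟩
            invFun := fun q => ⟨conjP q.1, key2 q.1 q.2⟩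
            left_inv := fun p => Subtype.ext (hcc p.1)
            right_inv := fun q => Subtype.ext (hcc q.1) }, fun p => rfl, fun q => rfl⟩
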